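/- Suppose π_1 and π_2 are sequences of distinct operations satisfying the no-join property, w_1 ∈ π_1 ∩ π_2, the prefix of π_2 ending at w_1 contains z−1 writes to X_2 (of values v_1,...,v_{z-1}, in that order), π_1 satisfies the sequential specification of X_2, and π_1 contains a read r of X_2 after w_1. Then r does not return any of v_1,...,v_{z-2}; if it returns a value written in π_1, that value is v_{z-1} or the value of a write to X_2 occurring in π_1 after w_1. -/

import Mathlib

/-- Data of a register operation: the register it accesses, whether it is a
write, and its value (`some v` = value written / returned; `none` = ⊥). -/
structure OpData (Reg Val : Type) where
  reg : Reg
  isWrite : Bool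
  val : Option Val

variable {Op Reg Val : Type}

/-- `o` is a write operation to register `X`. -/
def isWr (d : Op → OpData Reg Val) (X : Reg) (o : Op) : Prop :=
  (d o).reg = X ∧ (d o).isWrite = true

/-- `o` is a read operation of register `X`. -/
def isRd (d : Op → OpData Reg Val) (X : Reg) (o : Op) : Prop :=
  (d o).reg = X ∧ (d o).isWrite = false

/-- A sequential sequence `π` satisfies the sequential specification of
register `X`: every read of `X` returns the value of the most recent
preceding write to `X`, or the initial value ⊥ (`none`) if there is none. -/
def SeqSpec (d : Op → OpData Reg Val) (X : Reg) (π : List Op) : Prop :=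
  ∀ l1 o l2, π = l1 ++ o :: l2 → isRd d X o →
    ((∀ w ∈ l1, ¬ isWr d X w) ∧ (d o).val = none) ∨
    (∃ a w b, l1 = a ++ w :: b ∧ isWr d X w ∧ (d w).val = (d o).val ∧
      ∀ w' ∈ b, ¬ isWr d X w')

/-- `pfx π o` is the prefix of `π` ending with `o` (i.e. `π^o`). -/
def pfx [DecidableEq Op] (π : List Op) (o : Op) : List Op :=
  π.take (π.idxOf o + 1)

/-- The no-join property: for every operation in both sequences, the
prefixes ending at it coincide. -/
def NoJoin [DecidableEq Op] (π₁ π₂ : List Op) : Prop :=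
  ∀ o, o ∈ π₁ → o ∈ π₂ → pfx π₁ o = pfx π₂ o

/-- `o` occurs strictly before `o'` in the sequence `π`. -/
def before [DecidableEq Op] (π : List Op) (o o' : Op) : Prop :=
  o ∈ π ∧ o' ∈ π ∧ π.idxOf o < π.idxOf o'


section Helpers
variable {α : Type*} [DecidableEq α]

lemma mem_take_iff_aux {l : List α} {x : α} (hx : x ∈ l) (n : ℕ) :
    x ∈ l.take n ↔ List.idxOf x l < n := by
  constructor
  · intro h
    have h1 : List.idxOf x (l.take n) < (l.take n).length := List.idxOf_lt_length_iff.2 h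
    have h2 : List.idxOf x l = List.idxOf x (l.take n) := by
      conv_lhs => rw [← List.take_append_drop n l]
      rw [List.idxOf_append_of_mem h]
    rw [← h2] at h1
    exact lt_of_lt_of_le h1 (List.length_take_le n l)
  · intro h
    have hlt : List.idxOf x l < l.length := List.idxOf_lt_length_iff.2 hx
    have hlt' : List.idxOf x l < (l.take n).length := by
      rw [List.length_take]; omega
    have hg : (l.take n)[List.idxOf x l] = x := by
      rw [List.getElem_take]; exact List.getElem_idxOf hlt
    rw [← hg]
    exact List.getElem_mem _

lemma split_unique_aux {x : α} {a b c e : List α}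
    (h : (a ++ x :: b).Nodup) (he : a ++ x :: b = c ++ x :: e) : a = c ∧ b = e := by
  have hxa : x ∉ a := by
    rw [List.nodup_middle, List.nodup_cons] at h
    exact fun hm => h.1 (List.mem_append.2 (Or.inl hm))
  have hxc : x ∉ c := by
    have h' := he ▸ h
    rw [List.nodup_middle, List.nodup_cons] at h'
    exact fun hm => h'.1 (List.mem_append.2 (Or.inl hm))
  have hlen : a.length = c.length := by
    have h1 : List.idxOf x (a ++ x :: b) = a.length := by
      rw [List.idxOf_append_of_notMem hxa, List.idxOf_cons_self]; omega
    have h2 : List.idxOf x (c ++ x :: e) = c.length := by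
      rw [List.idxOf_append_of_notMem hxc, List.idxOf_cons_self]; omega
    rw [he, h2] at h1; omega
  obtain ⟨h3, h4⟩ := List.append_inj he hlen
  exact ⟨h3, by injection h4⟩

end Helpers

/-- If the prefix of `π₂` ending at `w₁` contains exactly the
writes `w 1, …, w (z-1)` to `X₂` (of values `v 1, …, v (z-1)`, in order),
the sequences satisfy no-join, and `π₁` contains a read `r` of `X₂` after
`w₁`, then `r` returns none of `v 1, …, v (z-2)`; if it returns a value
written in `π₁`, the matching write is `w (z-1)` or a write after `w₁`. -/
theorem nojoin_read_after_fork_not_old_value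
    {Op Reg Val : Type} [DecidableEq Op] [DecidableEq Reg]
    (d : Op → OpData Reg Val) (X2 : Reg)
    (z : ℕ) (hz : 2 ≤ z) (w : ℕ → Op) (v : ℕ → Val)
    (hvinj : Function.Injective v)
    (π₁ π₂ : List Op) (hnd1 : π₁.Nodup) (hnd2 : π₂.Nodup)
    (hNJ : NoJoin π₁ π₂)
    (w1 r : Op) (hw1 : w1 ∈ π₁) (hw1' : w1 ∈ π₂)
    (hpfxw : (pfx π₂ w1).filter (fun o => (d o).reg == X2 && (d o).isWrite)
      = (List.range (z - 1)).map (fun k => w (k + 1)))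
    (hwv : ∀ k, 1 ≤ k → k ≤ z - 1 → (d (w k)).val = some (v k))
    (hspec : SeqSpec d X2 π₁)
    (hrR : isRd d X2 r) (hord : before π₁ w1 r)
    (hdist : ∀ o o', (o ∈ π₁ ∨ o ∈ π₂) → (o' ∈ π₁ ∨ o' ∈ π₂) →
      isWr d X2 o → isWr d X2 o' → (d o).val = (d o').val → o = o') :
    (∀ k, 1 ≤ k → k ≤ z - 2 → (d r).val ≠ some (v k)) ∧
    (∀ w', w' ∈ π₁ → isWr d X2 w' → (d r).val = (d w').val →
      w' = w (z - 1) ∨ before π₁ w1 w') := by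
  classical
  have hisWr : ∀ o : Op, isWr d X2 o ↔ ((d o).reg == X2 && (d o).isWrite) = true := by
    intro o; simp [isWr, Bool.and_eq_true, beq_iff_eq]
  obtain ⟨hw1m, hrm, hlt⟩ := hord
  have hpfx1 : pfx π₁ w1 = pfx π₂ w1 := hNJ w1 hw1 hw1'
  have hi : π₁.idxOf r < π₁.length := List.idxOf_lt_length_iff.2 hrm
  set i := π₁.idxOf r with hidef
  set l1 := π₁.take i with hl1def
  set l2 := π₁.drop (i + 1) with hl2def
  have hsplit : π₁ = l1 ++ r :: l2 := by
    have h1 := List.take_append_drop i π₁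
    have h2 : π₁.drop i = r :: π₁.drop (i + 1) := by
      rw [← List.getElem_cons_drop (as := π₁) (i := i) hi]
      congr 1
      exact List.getElem_idxOf hi
    rw [h2] at h1
    exact h1.symm
  set P₁ := pfx π₁ w1 with hP₁def
  have hfilter : P₁.filter (fun o => (d o).reg == X2 && (d o).isWrite)
      = (List.range (z - 1)).map (fun k => w (k + 1)) := by
    rw [hpfx1]; exact hpfxw
  have hiw1 : π₁.idxOf w1 + 1 ≤ i := hlt
  have hP₁l1 : P₁ = l1.take (π₁.idxOf w1 + 1) := by
    rw [hl1def, List.take_take, min_eq_left hiw1]; rfl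
  set t := l1.drop (π₁.idxOf w1 + 1) with htdef
  have hl1split : l1 = P₁ ++ t := by
    rw [hP₁l1, htdef]; exact (List.take_append_drop _ l1).symm
  have hP₁subl1 : ∀ x ∈ P₁, x ∈ l1 := by
    intro x hx; rw [hl1split]; exact List.mem_append.2 (Or.inl hx)
  have hl1sub : l1 ⊆ π₁ := List.take_subset _ _
  have hl1nd : l1.Nodup := (List.take_sublist _ _).nodup hnd1
  have hz1 : z - 1 = (z - 2) + 1 := by omega
  have hmapsplit : (List.range (z - 1)).map (fun k => w (k + 1))
      = (List.range (z - 2)).map (fun k => w (k + 1)) ++ [w (z - 1)] := by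
    rw [hz1, List.range_succ, List.map_append]
    simp
  have hwlastF : w (z - 1) ∈ P₁.filter (fun o => (d o).reg == X2 && (d o).isWrite) := by
    rw [hfilter, hmapsplit]
    exact List.mem_append_right _ (List.mem_singleton.2 rfl)
  have hwlastP₁ : w (z - 1) ∈ P₁ := (List.mem_filter.1 hwlastF).1
  have hwlastWr : isWr d X2 (w (z - 1)) := (hisWr _).2 (List.mem_filter.1 hwlastF).2
  have hwlastl1 : w (z - 1) ∈ l1 := hP₁subl1 _ hwlastP₁
  have keyA : ∀ a b w'', l1 = a ++ w'' :: b → isWr d X2 w'' →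
      (∀ x ∈ b, ¬ isWr d X2 x) → w'' ∈ P₁ → w'' = w (z - 1) := by
    intro a b w'' hab hwr hnb hmem
    by_contra hne
    have hF : w'' ∈ P₁.filter (fun o => (d o).reg == X2 && (d o).isWrite) :=
      List.mem_filter.2 ⟨hmem, (hisWr _).1 hwr⟩
    rw [hfilter, hmapsplit] at hF
    have hF' : w'' ∈ (List.range (z - 2)).map (fun k => w (k + 1)) := by
      rcases List.mem_append.1 hF with h | h
      · exact h
      · exact absurd (List.mem_singleton.1 h) hne
    obtain ⟨c, e, hce⟩ := List.append_of_mem hF'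
    have hLeq : P₁.filter (fun o => (d o).reg == X2 && (d o).isWrite)
        = c ++ w'' :: (e ++ [w (z - 1)]) := by
      rw [hfilter, hmapsplit, hce]; simp [List.append_assoc]
    have hsub : (c ++ w'' :: (e ++ [w (z - 1)])).Sublist P₁ :=
      hLeq ▸ List.filter_sublist (l := P₁)
    rw [List.append_sublist_iff] at hsub
    obtain ⟨r₁, r₂, hPr, -, h2⟩ := hsub
    rw [List.cons_sublist_iff] at h2
    obtain ⟨s₁, s₂, hr₂, hw''s₁, h3⟩ := h2
    obtain ⟨c', m, hs₁⟩ := List.append_of_mem hw''s₁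
    have hl1eq : l1 = (r₁ ++ c') ++ w'' :: (m ++ (s₂ ++ t)) := by
      rw [hl1split, hPr, hr₂, hs₁]; simp [List.append_assoc]
    have hnod : (a ++ w'' :: b).Nodup := by rw [← hab]; exact hl1nd
    have heq2 : a ++ w'' :: b = (r₁ ++ c') ++ w'' :: (m ++ (s₂ ++ t)) := by
      rw [← hab]; exact hl1eq
    obtain ⟨-, hbe⟩ := split_unique_aux hnod heq2
    have hwl_s₂ : w (z - 1) ∈ s₂ := h3.subset (by simp)
    have hwl_b : w (z - 1) ∈ b := by
      rw [hbe]; exact List.mem_append.2 (Or.inr (List.mem_append.2 (Or.inl hwl_s₂)))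
    exact hnb _ hwl_b hwlastWr
  have keyB : ∀ a b w'', l1 = a ++ w'' :: b → isWr d X2 w'' →
      (∀ x ∈ b, ¬ isWr d X2 x) → w'' = w (z - 1) ∨ before π₁ w1 w'' := by
    intro a b w'' hab hwr hnb
    have hw''l1 : w'' ∈ l1 := by rw [hab]; simp
    by_cases hmem : w'' ∈ P₁
    · exact Or.inl (keyA a b w'' hab hwr hnb hmem)
    · right
      refine ⟨hw1m, hl1sub hw''l1, ?_⟩
      have hP₁π : P₁ = π₁.take (π₁.idxOf w1 + 1) := rfl
      rw [hP₁π] at hmem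
      have := (mem_take_iff_aux (hl1sub hw''l1) (π₁.idxOf w1 + 1)).not.1 hmem
      omega
  rcases hspec l1 r l2 hsplit hrR with ⟨hnw, -⟩ | ⟨a, w'', b, hab, hwr, hval, hnb⟩
  · exact absurd hwlastWr (hnw _ hwlastl1)
  · have hw''π₁ : w'' ∈ π₁ := hl1sub (by rw [hab]; simp)
    constructor
    · intro k hk1 hk2 hval_r
      have hwkF : w k ∈ P₁.filter (fun o => (d o).reg == X2 && (d o).isWrite) := by
        rw [hfilter]
        exact List.mem_map.2 ⟨k - 1, List.mem_range.2 (by omega), by congr 1; omega⟩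
      have hwkP₁ : w k ∈ P₁ := (List.mem_filter.1 hwkF).1
      have hwkWr : isWr d X2 (w k) := (hisWr _).2 (List.mem_filter.1 hwkF).2
      have hwkπ₁ : w k ∈ π₁ := hl1sub (hP₁subl1 _ hwkP₁)
      have hvk : (d (w k)).val = some (v k) := hwv k hk1 (by omega)
      have heqv : (d w'').val = (d (w k)).val := by rw [hval, hval_r, hvk]
      have hwk : w'' = w k :=
        hdist w'' (w k) (Or.inl hw''π₁) (Or.inl hwkπ₁) hwr hwkWr heqv
      have hwz : w'' = w (z - 1) := keyA a b w'' hab hwr hnb (hwk ▸ hwkP₁)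
      have hkz : w k = w (z - 1) := hwk.symm.trans hwz
      have hv : some (v k) = some (v (z - 1)) := by
        rw [← hvk, hkz]
        exact hwv (z - 1) (by omega) le_rfl
      have : k = z - 1 := hvinj (Option.some.inj hv)
      omega
    · intro w' hw'π₁ hw'Wr hvaleq
      have heqv : (d w'').val = (d w').val := hval.trans hvaleq
      have he : w'' = w' :=
        hdist _ _ (Or.inl hw''π₁) (Or.inl hw'π₁) hwr hw'Wr heqv
      rcases keyB a b w'' hab hwr hnb with h | h
      · exact Or.inl (he.symm.trans h)
      · exact Or.inr (he ▸ h)
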